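/- Let G be a graph and Δ(G) its clique complex. A cycle in G generates a nontrivial element of the first simplicial homology of Δ(G) only if G contains a minimal cycle (a chordless cycle of length > 3). In particular, if every cycle of G of length > 3 has a chord (G is chordal), then the first reduced simplicial homology of Δ(G) with coefficients in any field k vanishes. -/

import Mathlib

attribute [local instance] Classical.propDecidable

/-- An abstract simplicial complex on vertex type `V`. -/
structure SComplex (V : Type) [DecidableEq V] where
  faces : Set (Finset V)
  empty_mem : ∅ ∈ faces
  down_closed : ∀ {s t : Finset V}, s ∈ faces → t ⊆ s → t ∈ faces

variable {V : Type} [DecidableEq V]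

/-- The full subcomplex of `Δ` on a vertex set `W`: all faces contained in `W`. -/
def SComplex.fullSub (Δ : SComplex V) (W : Set V) : SComplex V where
  faces := {s | s ∈ Δ.faces ∧ ↑s ⊆ W}
  empty_mem := ⟨Δ.empty_mem, by simp⟩
  down_closed := fun hs hts =>
    ⟨Δ.down_closed hs.1 hts, Set.Subset.trans (Finset.coe_subset.mpr hts) hs.2⟩

variable [Fintype V] [LinearOrder V]

/-- The space of simplicial `k`-chains of `Δ` supported on faces with `n` vertices
(i.e. of dimension `n-1`); for `n = 0` this is the span of the empty face, so the
resulting chain complex is the augmented (reduced) one. -/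
abbrev SComplex.chain (k : Type) [Field k] (Δ : SComplex V) (n : ℕ) : Type :=
  {F : Finset V // F ∈ Δ.faces ∧ F.card = n} → k

/-- The simplicial boundary operator from chains on faces with `n+1` vertices to
chains on faces with `n` vertices, with the usual alternating signs determined by
the linear order on the vertices. -/
noncomputable def SComplex.bdry (k : Type) [Field k] (Δ : SComplex V) (n : ℕ) :
    Δ.chain k (n+1) →ₗ[k] Δ.chain k n where
  toFun f G := ∑ v : V,
    if h : v ∉ G.1 ∧ insert v G.1 ∈ Δ.faces then
      (-1 : k) ^ (G.1.filter (fun u => u < v)).card *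
        f ⟨insert v G.1, h.2, by rw [Finset.card_insert_of_notMem h.1, G.2.2]⟩
    else 0
  map_add' f g := by
    funext G
    show _ = (_ : k) + _
    rw [← Finset.sum_add_distrib]
    refine Finset.sum_congr rfl fun v _ => ?_
    by_cases h : v ∉ G.1 ∧ insert v G.1 ∈ Δ.faces
    · simp only [dif_pos h, Pi.add_apply]; ring
    · simp [dif_neg h]
  map_smul' c f := by
    funext G
    show _ = c * _
    rw [Finset.mul_sum]
    refine Finset.sum_congr rfl fun v _ => ?_
    by_cases h : v ∉ G.1 ∧ insert v G.1 ∈ Δ.faces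
    · simp only [dif_pos h, Pi.smul_apply, smul_eq_mul]; ring
    · simp [dif_neg h]

/-- The `i`-th reduced simplicial homology of `Δ` with coefficients in `k`:
cycles supported on faces with `i+1` vertices (dimension `i`) modulo boundaries.
(Since chains in degree 0 are spanned by the empty face, this is reduced homology.) -/
abbrev SComplex.redHomology (k : Type) [Field k] (Δ : SComplex V) (i : ℕ) :=
  LinearMap.ker (Δ.bdry k i) ⧸
    Submodule.comap (LinearMap.ker (Δ.bdry k i)).subtype
      (LinearMap.range (Δ.bdry k (i+1)))
/-- The clique (flag) complex of a graph: faces are the cliques of `G`. -/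
def cliqueComplex {V : Type} [DecidableEq V] (G : SimpleGraph V) : SComplex V where
  faces := {s | G.IsClique ↑s}
  empty_mem := by simp
  down_closed := fun hs hts => hs.subset (Finset.coe_subset.mpr hts)

/-- A cycle of length `q` in `G`: distinct vertices `v 0, …, v (q-1)` with
`v i` adjacent to `v (i+1)` (indices mod `q`). -/
def IsGraphCycle {V : Type} (G : SimpleGraph V) {q : ℕ} [NeZero q] (v : Fin q → V) : Prop :=
  Function.Injective v ∧ ∀ i : Fin q, G.Adj (v i) (v (i + 1))

/-- The cycle `v` has a chord: an edge of `G` between two non-consecutive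
vertices of the cycle. -/
def CycleHasChord {V : Type} (G : SimpleGraph V) {q : ℕ} [NeZero q] (v : Fin q → V) : Prop :=
  ∃ i j : Fin q, j ≠ i + 1 ∧ i ≠ j + 1 ∧ G.Adj (v i) (v j)

/-- A minimal cycle: a chordless cycle of length `> 3`. -/
def IsMinimalCycle {V : Type} (G : SimpleGraph V) {q : ℕ} [NeZero q] (v : Fin q → V) : Prop :=
  3 < q ∧ IsGraphCycle G v ∧ ¬ CycleHasChord G v

/-- `G` is chordal: it has no minimal (chordless, length `> 3`) cycle;
equivalently every cycle of length `> 3` has a chord. -/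
def IsChordal {V : Type} (G : SimpleGraph V) : Prop :=
  ∀ (q : ℕ) (v : Fin (q + 1) → V), ¬ IsMinimalCycle G v

section ChordalAux
set_option linter.unusedSectionVars false
set_option linter.unreachableTactic false
set_option linter.unusedTactic false
open Fin.NatCast

variable {V : Type} [DecidableEq V] [Fintype V] [LinearOrder V] (k : Type) [Field k]
  (G : SimpleGraph V)

/-- The elementary 1-chain of an oriented edge `(a,b)`. -/
noncomputable def ech (a b : V) : (cliqueComplex G).chain k 2 := fun F =>
  if F.1 = {a, b} then (if a < b then 1 else if b < a then -1 else 0) else 0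

/-- The elementary 0-chain of a vertex. -/
noncomputable def vch (w : V) : (cliqueComplex G).chain k 1 := fun F =>
  if F.1 = {w} then 1 else 0

/-- The elementary 2-chain of a triangle. -/
noncomputable def tch (a b c : V) : (cliqueComplex G).chain k 3 := fun F =>
  if F.1 = {a, b, c} then 1 else 0

/-- The 1-chain associated to a cyclic vertex sequence. -/
noncomputable def Zc {q : ℕ} [NeZero q] (v : Fin q → V) : (cliqueComplex G).chain k 2 :=
  ∑ i : Fin q, ech k G (v i) (v (i + 1))

lemma bdry_eval {n : ℕ} (Δ : SComplex V) (f : Δ.chain k (n+1))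
    (F : {F : Finset V // F ∈ Δ.faces ∧ F.card = n}) :
    Δ.bdry k n f F = ∑ v : V, (if h : v ∉ F.1 ∧ insert v F.1 ∈ Δ.faces then
      (-1 : k) ^ (F.1.filter (fun u => u < v)).card *
        f ⟨insert v F.1, h.2, by rw [Finset.card_insert_of_notMem h.1, F.2.2]⟩
    else 0) := rfl

lemma bdry_apply_zero {n : ℕ} (Δ : SComplex V) (f : Δ.chain k (n+1))
    (F : {F : Finset V // F ∈ Δ.faces ∧ F.card = n})
    (h : ∀ (v : V) (hv : v ∉ F.1 ∧ insert v F.1 ∈ Δ.faces),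
      f ⟨insert v F.1, hv.2, by rw [Finset.card_insert_of_notMem hv.1, F.2.2]⟩ = 0) :
    Δ.bdry k n f F = 0 := by
  rw [bdry_eval]
  refine Finset.sum_eq_zero fun v _ => ?_
  split_ifs with hv
  · rw [h v hv, mul_zero]
  · rfl

lemma bdry_apply_single {n : ℕ} (Δ : SComplex V) (f : Δ.chain k (n+1))
    (F : {F : Finset V // F ∈ Δ.faces ∧ F.card = n}) (v0 : V)
    (h1 : v0 ∉ F.1) (h2 : insert v0 F.1 ∈ Δ.faces)
    (h3 : ∀ (v : V) (hv : v ∉ F.1 ∧ insert v F.1 ∈ Δ.faces), v ≠ v0 →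
      f ⟨insert v F.1, hv.2, by rw [Finset.card_insert_of_notMem hv.1, F.2.2]⟩ = 0) :
    Δ.bdry k n f F = (-1 : k) ^ (F.1.filter (fun u => u < v0)).card *
      f ⟨insert v0 F.1, h2, by rw [Finset.card_insert_of_notMem h1, F.2.2]⟩ := by
  rw [bdry_eval, Finset.sum_eq_single v0]
  · rw [dif_pos ⟨h1, h2⟩]
  · intro v _ hne
    split_ifs with hv
    · rw [h3 v hv hne, mul_zero]
    · rfl
  · intro h; exact absurd (Finset.mem_univ v0) h

lemma singleton_face (w : V) : ({w} : Finset V) ∈ (cliqueComplex G).faces := by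
  show G.IsClique _
  simp

lemma pair_face {a b : V} (hab : G.Adj a b) :
    ({a, b} : Finset V) ∈ (cliqueComplex G).faces := by
  show G.IsClique _
  rw [Finset.coe_insert, Finset.coe_singleton]
  exact SimpleGraph.isClique_pair.mpr fun _ => hab

lemma triple_face {a b c : V} (hab : G.Adj a b) (hbc : G.Adj b c) (hac : G.Adj a c) :
    ({a, b, c} : Finset V) ∈ (cliqueComplex G).faces := by
  show G.IsClique _
  intro x hx y hy hxy
  simp only [Finset.coe_insert, Set.mem_insert_iff, Finset.coe_singleton,
    Set.mem_singleton_iff] at hx hy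
  rcases hx with rfl | rfl | rfl <;> rcases hy with rfl | rfl | rfl <;>
    first
      | exact absurd rfl hxy
      | assumption
      | exact hab.symm
      | exact hbc.symm
      | exact hac.symm

lemma ech_swap (a b : V) : ech k G a b = - ech k G b a := by
  funext F
  simp only [ech, Pi.neg_apply]
  rw [Finset.pair_comm b a]
  by_cases hF : F.1 = {a, b}
  · rw [if_pos hF, if_pos hF]
    rcases lt_trichotomy a b with h | h | h
    · rw [if_pos h, if_neg (asymm h), if_pos h]; norm_num
    · rw [if_neg h.not_gt, if_neg (h ▸ h.not_gt), if_neg h.not_gt, if_neg (h ▸ h.not_gt)]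
      norm_num
    · rw [if_neg (asymm h), if_pos h, if_pos h]
  · rw [if_neg hF, if_neg hF, neg_zero]

lemma ech_apply (a b : V) (F : {F : Finset V // F ∈ (cliqueComplex G).faces ∧ F.card = 2}) :
    ech k G a b F = if F.1 = {a, b} then (if a < b then (1:k) else if b < a then -1 else 0) else 0 :=
  rfl

lemma vch_apply (w : V) (F : {F : Finset V // F ∈ (cliqueComplex G).faces ∧ F.card = 1}) :
    vch k G w F = if F.1 = {w} then (1:k) else 0 := rfl

lemma tch_apply (a b c : V) (F : {F : Finset V // F ∈ (cliqueComplex G).faces ∧ F.card = 3}) :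
    tch k G a b c F = if F.1 = {a, b, c} then (1:k) else 0 := rfl

lemma bdry_ech {a b : V} (hab : G.Adj a b) :
    (cliqueComplex G).bdry k 1 (ech k G a b) = vch k G b - vch k G a := by
  have hne : a ≠ b := hab.ne
  funext F
  obtain ⟨w, hw⟩ := Finset.card_eq_one.mp F.2.2
  by_cases hwa : w = a
  · have hw' : F.1 = {a} := by rw [hw, hwa]
    have hb : b ∉ F.1 := by rw [hw']; simp [Ne.symm hne]
    have hins : insert b F.1 = {a, b} := by rw [hw']; exact Finset.pair_comm b a
    have hface : insert b F.1 ∈ (cliqueComplex G).faces := by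
      rw [hins]; exact pair_face G hab
    have huniq : ∀ (v : V) (hv : v ∉ F.1 ∧ insert v F.1 ∈ (cliqueComplex G).faces), v ≠ b →
        ech k G a b ⟨insert v F.1, hv.2,
          by rw [Finset.card_insert_of_notMem hv.1, F.2.2]⟩ = 0 := by
      intro v hv hvb
      have hva : v ≠ a := fun h => hv.1 (by rw [hw', h]; exact Finset.mem_singleton_self a)
      rw [ech_apply]
      refine if_neg fun hcon => ?_
      have : v ∈ ({a, b} : Finset V) := hcon ▸ Finset.mem_insert_self v F.1
      simp only [Finset.mem_insert, Finset.mem_singleton] at this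
      tauto
    rw [bdry_apply_single k _ _ F b hb hface huniq, ech_apply]
    rw [if_pos hins]
    simp only [vch_apply, Pi.sub_apply, hw', Finset.filter_singleton]
    have hba : ({a} : Finset V) ≠ {b} := fun h => hne (Finset.singleton_injective h)
    rcases lt_or_gt_of_ne hne with h | h
    · norm_num [hba, h, asymm h]
    · norm_num [hba, h, asymm h]
  · by_cases hwb : w = b
    · have hw' : F.1 = {b} := by rw [hw, hwb]
      have ha : a ∉ F.1 := by rw [hw']; simp [hne]
      have hins : insert a F.1 = {a, b} := by rw [hw']
      have hface : insert a F.1 ∈ (cliqueComplex G).faces := by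
        rw [hins]; exact pair_face G hab
      have huniq : ∀ (v : V) (hv : v ∉ F.1 ∧ insert v F.1 ∈ (cliqueComplex G).faces), v ≠ a →
          ech k G a b ⟨insert v F.1, hv.2,
            by rw [Finset.card_insert_of_notMem hv.1, F.2.2]⟩ = 0 := by
        intro v hv hva
        have hvb : v ≠ b := fun h => hv.1 (by rw [hw', h]; exact Finset.mem_singleton_self b)
        rw [ech_apply]
        refine if_neg fun hcon => ?_
        have : v ∈ ({a, b} : Finset V) := hcon ▸ Finset.mem_insert_self v F.1
        simp only [Finset.mem_insert, Finset.mem_singleton] at this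
        tauto
      rw [bdry_apply_single k _ _ F a ha hface huniq, ech_apply]
      rw [if_pos hins]
      simp only [vch_apply, Pi.sub_apply, hw', Finset.filter_singleton]
      have hba : ({b} : Finset V) ≠ {a} := fun h => hne (Finset.singleton_injective h).symm
      rcases lt_or_gt_of_ne hne with h | h
      · norm_num [hba, h, asymm h]
      · norm_num [hba, h, asymm h]
    · have hzz : ∀ (v : V) (hv : v ∉ F.1 ∧ insert v F.1 ∈ (cliqueComplex G).faces),
          ech k G a b ⟨insert v F.1, hv.2,
            by rw [Finset.card_insert_of_notMem hv.1, F.2.2]⟩ = 0 := by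
        intro v hv
        rw [ech_apply]
        refine if_neg fun hcon => ?_
        have hwmem : w ∈ ({a, b} : Finset V) := by
          rw [← hcon]
          exact Finset.mem_insert_of_mem (hw ▸ Finset.mem_singleton_self w)
        simp only [Finset.mem_insert, Finset.mem_singleton] at hwmem
        tauto
      rw [bdry_apply_zero k _ _ F hzz]
      simp only [vch_apply, Pi.sub_apply, hw]
      rw [if_neg (fun h => hwb (Finset.singleton_injective h)),
        if_neg (fun h => hwa (Finset.singleton_injective h))]
      norm_num

lemma bdry_Zc {q : ℕ} [NeZero q] (v : Fin q → V) (hv : ∀ i, G.Adj (v i) (v (i + 1))) :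
    (cliqueComplex G).bdry k 1 (Zc k G v) = 0 := by
  rw [Zc, map_sum]
  have h1 : ∑ i : Fin q, (cliqueComplex G).bdry k 1 (ech k G (v i) (v (i + 1)))
      = ∑ i : Fin q, (vch k G (v (i + 1)) - vch k G (v i)) :=
    Finset.sum_congr rfl fun i _ => bdry_ech k G (hv i)
  rw [h1, Finset.sum_sub_distrib, sub_eq_zero]
  exact Fintype.sum_equiv (Equiv.addRight (1 : Fin q)) (fun i => vch k G (v (i + 1)))
    (fun i => vch k G (v i)) (fun i => rfl)

lemma bdry_tch {x y z : V} (hxy : x < y) (hyz : y < z)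
    (haxy : G.Adj x y) (hayz : G.Adj y z) (haxz : G.Adj x z) :
    (cliqueComplex G).bdry k 2 (tch k G x y z) = ech k G x y + ech k G y z + ech k G z x := by
  have hxz : x < z := hxy.trans hyz
  have nxy : x ≠ y := hxy.ne
  have nyz : y ≠ z := hyz.ne
  have nxz : x ≠ z := hxz.ne
  funext F
  simp only [Pi.add_apply, ech_apply]
  by_cases h1 : F.1 = {x, y}
  · have hz : z ∉ F.1 := by rw [h1]; simp [Ne.symm nxz, Ne.symm nyz]
    have hins : insert z F.1 = {x, y, z} := by rw [h1]; ext t; simp; tauto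
    have hface : insert z F.1 ∈ (cliqueComplex G).faces := by
      rw [hins]; exact triple_face G haxy hayz haxz
    have huniq : ∀ (v : V) (hv : v ∉ F.1 ∧ insert v F.1 ∈ (cliqueComplex G).faces), v ≠ z →
        tch k G x y z ⟨insert v F.1, hv.2,
          by rw [Finset.card_insert_of_notMem hv.1, F.2.2]⟩ = 0 := by
      intro v hv hvz
      rw [tch_apply]
      refine if_neg fun hcon => ?_
      have hmem : v ∈ ({x, y, z} : Finset V) := hcon ▸ Finset.mem_insert_self v F.1
      have hvx : v ≠ x := fun h => hv.1 (by rw [h1, h]; simp)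
      have hvy : v ≠ y := fun h => hv.1 (by rw [h1, h]; simp)
      simp only [Finset.mem_insert, Finset.mem_singleton] at hmem
      tauto
    rw [bdry_apply_single k _ _ F z hz hface huniq, tch_apply, if_pos hins]
    have hfil : F.1.filter (fun u => u < z) = F.1 := by
      rw [Finset.filter_eq_self]; intro t ht; rw [h1] at ht
      simp only [Finset.mem_insert, Finset.mem_singleton] at ht
      rcases ht with rfl | rfl
      · exact hxz
      · exact hyz
    rw [hfil, h1]
    have c2 : ({x, y} : Finset V).card = 2 := by
      rw [Finset.card_insert_of_notMem (by simp [nxy]), Finset.card_singleton]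
    rw [c2]
    have e1 : ({x, y} : Finset V) ≠ {y, z} :=
      fun h => absurd (h ▸ Finset.mem_insert_self x {y}) (by simp [nxy, nxz])
    have e2 : ({x, y} : Finset V) ≠ {z, x} :=
      fun h => absurd (h ▸ Finset.mem_insert_of_mem (Finset.mem_singleton_self y))
        (by simp only [Finset.mem_insert, Finset.mem_singleton]
            rintro (h | h)
            · exact nyz h
            · exact nxy h.symm)
    norm_num [e1, e2, hxy]
  · by_cases h2 : F.1 = {x, z}
    · have hy : y ∉ F.1 := by rw [h2]; simp [Ne.symm nxy, nyz]
      have hins : insert y F.1 = {x, y, z} := by rw [h2]; ext t; simp; tauto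
      have hface : insert y F.1 ∈ (cliqueComplex G).faces := by
        rw [hins]; exact triple_face G haxy hayz haxz
      have huniq : ∀ (v : V) (hv : v ∉ F.1 ∧ insert v F.1 ∈ (cliqueComplex G).faces), v ≠ y →
          tch k G x y z ⟨insert v F.1, hv.2,
            by rw [Finset.card_insert_of_notMem hv.1, F.2.2]⟩ = 0 := by
        intro v hv hvy
        rw [tch_apply]
        refine if_neg fun hcon => ?_
        have hmem : v ∈ ({x, y, z} : Finset V) := hcon ▸ Finset.mem_insert_self v F.1
        have hvx : v ≠ x := fun h => hv.1 (by rw [h2, h]; simp)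
        have hvz : v ≠ z := fun h => hv.1 (by rw [h2, h]; simp)
        simp only [Finset.mem_insert, Finset.mem_singleton] at hmem
        tauto
      rw [bdry_apply_single k _ _ F y hy hface huniq, tch_apply, if_pos hins]
      have hfil : F.1.filter (fun u => u < y) = {x} := by
        rw [h2]; ext t
        simp only [Finset.mem_filter, Finset.mem_insert, Finset.mem_singleton]
        constructor
        · rintro ⟨rfl | rfl, ht⟩
          · rfl
          · exact absurd ht (asymm hyz)
        · rintro rfl; exact ⟨Or.inl rfl, hxy⟩
      rw [hfil, Finset.card_singleton, h2]
      have e1 : ({x, z} : Finset V) ≠ {x, y} :=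
        fun h => absurd (h ▸ Finset.mem_insert_of_mem (Finset.mem_singleton_self z))
          (by simp [Ne.symm nxz, Ne.symm nyz])
      have e2 : ({x, z} : Finset V) ≠ {y, z} :=
        fun h => absurd (h ▸ Finset.mem_insert_self x {z}) (by simp [nxy, nxz])
      have e3 : ({x, z} : Finset V) = {z, x} := Finset.pair_comm x z
      rw [if_neg e1, if_neg e2, if_pos e3, if_neg (asymm hxz), if_pos hxz]
      norm_num
    · by_cases h3 : F.1 = {y, z}
      · have hx : x ∉ F.1 := by rw [h3]; simp [nxy, nxz]
        have hins : insert x F.1 = {x, y, z} := by rw [h3]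
        have hface : insert x F.1 ∈ (cliqueComplex G).faces := by
          rw [hins]; exact triple_face G haxy hayz haxz
        have huniq : ∀ (v : V) (hv : v ∉ F.1 ∧ insert v F.1 ∈ (cliqueComplex G).faces), v ≠ x →
            tch k G x y z ⟨insert v F.1, hv.2,
              by rw [Finset.card_insert_of_notMem hv.1, F.2.2]⟩ = 0 := by
          intro v hv hvx
          rw [tch_apply]
          refine if_neg fun hcon => ?_
          have hmem : v ∈ ({x, y, z} : Finset V) := hcon ▸ Finset.mem_insert_self v F.1
          have hvy : v ≠ y := fun h => hv.1 (by rw [h3, h]; simp)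
          have hvz : v ≠ z := fun h => hv.1 (by rw [h3, h]; simp)
          simp only [Finset.mem_insert, Finset.mem_singleton] at hmem
          tauto
        rw [bdry_apply_single k _ _ F x hx hface huniq, tch_apply, if_pos hins]
        have hfil : F.1.filter (fun u => u < x) = ∅ := by
          rw [h3]; ext t
          simp only [Finset.mem_filter, Finset.mem_insert, Finset.mem_singleton,
            Finset.notMem_empty, iff_false, not_and]
          rintro (rfl | rfl)
          · exact asymm hxy
          · exact asymm hxz
        rw [hfil, Finset.card_empty, h3]
        have e1 : ({y, z} : Finset V) ≠ {x, y} :=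
          fun h => absurd (h ▸ Finset.mem_insert_of_mem (Finset.mem_singleton_self z))
            (by simp [Ne.symm nxz, Ne.symm nyz])
        have e2 : ({y, z} : Finset V) ≠ {z, x} :=
          fun h => absurd (h ▸ Finset.mem_insert_self y {z})
            (by simp [nyz, Ne.symm nxy])
        norm_num [e1, e2, hyz]
      · have hzz : ∀ (v : V) (hv : v ∉ F.1 ∧ insert v F.1 ∈ (cliqueComplex G).faces),
            tch k G x y z ⟨insert v F.1, hv.2,
              by rw [Finset.card_insert_of_notMem hv.1, F.2.2]⟩ = 0 := by
          intro v hv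
          rw [tch_apply]
          refine if_neg fun hcon => ?_
          have hF : F.1 = ({x, y, z} : Finset V).erase v := by
            rw [← hcon, Finset.erase_insert hv.1]
          have hmem : v ∈ ({x, y, z} : Finset V) := hcon ▸ Finset.mem_insert_self v F.1
          simp only [Finset.mem_insert, Finset.mem_singleton] at hmem
          rcases hmem with rfl | rfl | rfl
          · refine h3 (hF.trans ?_)
            ext t; simp only [Finset.mem_erase, Finset.mem_insert, Finset.mem_singleton]
            constructor
            · rintro ⟨htv, rfl | rfl | rfl⟩
              · exact absurd rfl htv
              · exact Or.inl rfl
              · exact Or.inr rfl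
            · rintro (rfl | rfl)
              · exact ⟨Ne.symm nxy, Or.inr (Or.inl rfl)⟩
              · exact ⟨Ne.symm nxz, Or.inr (Or.inr rfl)⟩
          · refine h2 (hF.trans ?_)
            ext t; simp only [Finset.mem_erase, Finset.mem_insert, Finset.mem_singleton]
            constructor
            · rintro ⟨htv, rfl | rfl | rfl⟩
              · exact Or.inl rfl
              · exact absurd rfl htv
              · exact Or.inr rfl
            · rintro (rfl | rfl)
              · exact ⟨nxy, Or.inl rfl⟩
              · exact ⟨Ne.symm nyz, Or.inr (Or.inr rfl)⟩
          · refine h1 (hF.trans ?_)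
            ext t; simp only [Finset.mem_erase, Finset.mem_insert, Finset.mem_singleton]
            constructor
            · rintro ⟨htv, rfl | rfl | rfl⟩
              · exact Or.inl rfl
              · exact Or.inr rfl
              · exact absurd rfl htv
            · rintro (rfl | rfl)
              · exact ⟨nxz, Or.inl rfl⟩
              · exact ⟨nyz, Or.inr (Or.inl rfl)⟩
        rw [bdry_apply_zero k _ _ F hzz]
        have h2' : F.1 ≠ ({z, x} : Finset V) := fun h => h2 (h.trans (Finset.pair_comm z x))
        norm_num [h1, h2', h3]

lemma tri_mem {a b c : V} (hab : G.Adj a b) (hbc : G.Adj b c) (hca : G.Adj c a) :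
    ech k G a b + ech k G b c + ech k G c a ∈
      LinearMap.range ((cliqueComplex G).bdry k 2) := by
  rcases lt_trichotomy a b with h1 | h1 | h1
  · rcases lt_trichotomy b c with h2 | h2 | h2
    · -- a < b < c
      exact ⟨tch k G a b c, by rw [bdry_tch k G h1 h2 hab hbc hca.symm]⟩
    · exact absurd h2 hbc.ne
    · rcases lt_trichotomy a c with h3 | h3 | h3
      · -- a < c < b
        refine ⟨-tch k G a c b, ?_⟩
        rw [map_neg, bdry_tch k G h3 h2 hca.symm hbc.symm hab]
        rw [ech_swap k G a c, ech_swap k G c b, ech_swap k G b a]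
        abel
      · exact absurd h3.symm hca.ne
      · -- c < a < b
        refine ⟨tch k G c a b, ?_⟩
        rw [bdry_tch k G h3 h1 hca hab hbc.symm]
        abel
  · exact absurd h1 hab.ne
  · rcases lt_trichotomy b c with h2 | h2 | h2
    · rcases lt_trichotomy a c with h3 | h3 | h3
      · -- b < a < c
        refine ⟨-tch k G b a c, ?_⟩
        rw [map_neg, bdry_tch k G h1 h3 hab.symm hca.symm hbc]
        rw [ech_swap k G b a, ech_swap k G a c, ech_swap k G c b]
        abel
      · exact absurd h3.symm hca.ne
      · -- b < c < a
        refine ⟨tch k G b c a, ?_⟩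
        rw [bdry_tch k G h2 h3 hbc hca hab.symm]
        abel
    · exact absurd h2 hbc.ne
    · -- c < b < a
      refine ⟨-tch k G c b a, ?_⟩
      rw [map_neg, bdry_tch k G h2 h1 hbc.symm hab.symm hca]
      rw [ech_swap k G c b, ech_swap k G b a, ech_swap k G a c]
      abel

lemma Zc_rotate {q : ℕ} [NeZero q] (v : Fin q → V) (c : Fin q) :
    Zc k G (fun t => v (t + c)) = Zc k G v := by
  rw [Zc, Zc]
  exact Fintype.sum_equiv (Equiv.addRight c)
    (fun t => ech k G (v (t + c)) (v (t + 1 + c)))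
    (fun i => ech k G (v i) (v (i + 1)))
    (fun t => by simp only [Equiv.coe_addRight]; rw [add_right_comm t 1 c])

lemma Zc_range {Q : ℕ} [NeZero Q] (v : Fin Q → V) :
    Zc k G v = ∑ n ∈ Finset.range Q, ech k G (v (n : Fin Q)) (v ((n + 1 : ℕ) : Fin Q)) := by
  rw [Zc, ← Fin.sum_univ_eq_sum_range (fun n => ech k G (v (n : Fin Q)) (v ((n + 1 : ℕ) : Fin Q))) Q]
  refine Finset.sum_congr rfl fun t _ => ?_
  have h1 : ((t.val : ℕ) : Fin Q) = t := Fin.cast_val_eq_self t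
  have h2 : ((t.val + 1 : ℕ) : Fin Q) = t + 1 := by rw [Nat.cast_add, Nat.cast_one, h1]
  rw [h1, h2]

lemma cycle_mem (hG : IsChordal G) :
    ∀ q : ℕ, ∀ v : Fin (q + 1) → V, IsGraphCycle G v →
      Zc k G v ∈ LinearMap.range ((cliqueComplex G).bdry k 2) := by
  intro q
  induction q using Nat.strong_induction_on with
  | _ q ih =>
    intro v hv
    rcases Nat.lt_or_ge q 3 with hq | hq
    · interval_cases q
      · have h0 : (0 + 1 : Fin 1) = 0 := Subsingleton.elim _ _
        have := hv.2 0
        rw [h0] at this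
        exact absurd this G.irrefl
      · have hz : Zc k G v = 0 := by
          rw [Zc, Fin.sum_univ_two]
          have h1 : (0 + 1 : Fin 2) = 1 := rfl
          have h2 : (1 + 1 : Fin 2) = 0 := rfl
          rw [h1, h2, ech_swap k G (v 0) (v 1)]
          abel
        rw [hz]
        exact zero_mem _
      · rw [Zc, Fin.sum_univ_three]
        have e1 : (0 + 1 : Fin 3) = 1 := rfl
        have e2 : (1 + 1 : Fin 3) = 2 := rfl
        have e3 : (2 + 1 : Fin 3) = 0 := rfl
        rw [e1, e2, e3]
        have h01 := hv.2 0; rw [e1] at h01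
        have h12 := hv.2 1; rw [e2] at h12
        have h20 := hv.2 2; rw [e3] at h20
        exact tri_mem k G h01 h12 h20
    · -- chord case
      have hchord : CycleHasChord G v := by
        by_contra hcc
        exact hG q v ⟨by omega, hv, hcc⟩
      obtain ⟨i, j0, hj1, hj2, hadj0⟩ := hchord
      rw [← Zc_rotate k G v i]
      set u : Fin (q + 1) → V := fun t => v (t + i) with hu
      have huinj : Function.Injective u := fun s t hst => add_right_cancel (hv.1 hst)
      have hucyc : IsGraphCycle G u := by
        refine ⟨huinj, fun t => ?_⟩
        show G.Adj (v (t + i)) (v (t + 1 + i))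
        rw [add_right_comm t 1 i]
        exact hv.2 (t + i)
      have huj : u (j0 - i) = v j0 := by show v (j0 - i + i) = v j0; rw [sub_add_cancel]
      have hu0 : u 0 = v i := by show v (0 + i) = v i; rw [zero_add]
      have hadj : G.Adj (u 0) (u (j0 - i)) := by rw [huj, hu0]; exact hadj0
      have hjne0 : j0 - i ≠ 0 := fun h => hadj.ne (by rw [h])
      have hjne1 : j0 - i ≠ 1 := by
        intro h
        apply hj1
        rw [sub_eq_iff_eq_add] at h
        rw [h]
        exact add_comm 1 i
      have hjlast : j0 - i + 1 ≠ 0 := by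
        intro h
        apply hj2
        have h1 : j0 - i = -1 := by rwa [add_eq_zero_iff_eq_neg] at h
        rw [sub_eq_iff_eq_add] at h1
        rw [h1]
        abel
      obtain ⟨J, hJlt, hjval⟩ : ∃ n, ∃ hn : n < q + 1, j0 - i = ⟨n, hn⟩ :=
        ⟨(j0 - i).val, (j0 - i).isLt, by apply Fin.ext; rfl⟩
      rw [hjval] at hadj hjne0 hjne1 hjlast huj
      have h1Q : (1 : Fin (q + 1)).val = 1 := by
        rw [Fin.val_one']
        exact Nat.mod_eq_of_lt (by omega)
      have hJ0 : J ≠ 0 := by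
        intro h
        apply hjne0
        apply Fin.ext
        rw [Fin.val_zero]
        exact h
      have hJ1 : J ≠ 1 := by
        intro h
        apply hjne1
        apply Fin.ext
        rw [h1Q]
        exact h
      have hvadd : ((⟨J, hJlt⟩ : Fin (q + 1)) + 1).val = (J + 1) % (q + 1) := by
        rw [Fin.val_add, h1Q]
      have hJQ : J + 1 < q + 1 := by
        by_contra hcon
        apply hjlast
        apply Fin.ext
        rw [hvadd, Fin.val_zero]
        have hJe : J + 1 = q + 1 := by omega
        rw [hJe, Nat.mod_self]
      have hJ2 : 2 ≤ J := by omega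
      set w : ℕ → V := fun n => u ((n : Fin (q + 1))) with hwdef
      have hw0 : w 0 = u 0 := by simp only [hwdef, Nat.cast_zero]
      have hwQ : w (q + 1) = w 0 := by
        simp only [hwdef, Nat.cast_zero, Fin.natCast_self]
      have hwJ : w J = u ⟨J, hJlt⟩ := by
        simp only [hwdef]
        congr 1
        apply Fin.ext
        rw [Fin.val_cast_of_lt hJlt]
      have hwadj : ∀ n : ℕ, G.Adj (w n) (w (n + 1)) := by
        intro n
        have h := hucyc.2 ((n : Fin (q + 1)))
        simp only [hwdef]
        have hc : ((n + 1 : ℕ) : Fin (q + 1)) = (n : Fin (q + 1)) + 1 := by push_cast; ring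
        rw [hc]
        exact h
      have hwinj : ∀ m n, m < q + 1 → n < q + 1 → w m = w n → m = n := by
        intro m n hm hn h
        simp only [hwdef] at h
        have h2 := congrArg Fin.val (huinj h)
        rwa [Fin.val_cast_of_lt hm, Fin.val_cast_of_lt hn] at h2
      -- the two smaller cycles
      set c1 : Fin (J + 1) → V := fun t => w t.val with hc1def
      have hc1cast : ∀ n, n < J + 1 → c1 ((n : ℕ) : Fin (J + 1)) = w n := by
        intro n hn
        simp only [hc1def]
        rw [Fin.val_cast_of_lt hn]
      have hc1 : IsGraphCycle G c1 := by
        constructor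
        · intro t1 t2 h
          simp only [hc1def] at h
          have h1 := t1.isLt
          have h2 := t2.isLt
          exact Fin.ext (hwinj _ _ (by omega) (by omega) h)
        · intro t
          simp only [hc1def]
          rcases Nat.lt_or_ge t.val J with ht | ht
          · have hne : t ≠ Fin.last J := by
              intro hcon
              rw [hcon, Fin.val_last] at ht
              exact absurd ht (lt_irrefl _)
            have hval : (t + 1).val = t.val + 1 := by rw [Fin.val_add_one, if_neg hne]
            rw [hval]
            exact hwadj t.val
          · have htJ : t.val = J := by have := t.isLt; omega
            have hne : t = Fin.last J := Fin.ext (by rw [htJ, Fin.val_last])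
            have hval : (t + 1).val = 0 := by rw [Fin.val_add_one, if_pos hne]
            rw [hval, htJ, hwJ, hw0]
            exact hadj.symm
      have hZc1 : Zc k G c1 = (∑ n ∈ Finset.range J, ech k G (w n) (w (n + 1)))
          + ech k G (w J) (w 0) := by
        rw [Zc_range, Finset.sum_range_succ]
        congr 1
        · refine Finset.sum_congr rfl fun n hn => ?_
          rw [Finset.mem_range] at hn
          rw [hc1cast n (by omega), hc1cast (n + 1) (by omega)]
        · rw [hc1cast J (by omega)]
          have hz : ((J + 1 : ℕ) : Fin (J + 1)) = 0 := Fin.natCast_self (J + 1)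
          rw [hz]
          simp only [hc1def]
          rw [Fin.val_zero]
      set M := q + 1 - J with hMdef
      have hM2 : 2 ≤ M := by omega
      set c2 : Fin (M + 1) → V := fun t => if t.val = 0 then w 0 else w (J + t.val - 1)
        with hc2def
      have hc2zero : c2 0 = w 0 := by
        simp only [hc2def]
        rw [if_pos (Fin.val_zero _)]
      have hc2cast : ∀ n, 1 ≤ n → n < M + 1 → c2 ((n : ℕ) : Fin (M + 1)) = w (J + n - 1) := by
        intro n hn1 hn2
        simp only [hc2def]
        rw [Fin.val_cast_of_lt hn2, if_neg (by omega)]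
      have hc2 : IsGraphCycle G c2 := by
        constructor
        · intro t1 t2 h
          simp only [hc2def] at h
          have h1 := t1.isLt
          have h2 := t2.isLt
          by_cases e1 : t1.val = 0 <;> by_cases e2 : t2.val = 0
          · exact Fin.ext (by rw [e1, e2])
          · rw [if_pos e1, if_neg e2] at h
            exact absurd (hwinj 0 (J + t2.val - 1) (by omega) (by omega) h) (by omega)
          · rw [if_neg e1, if_pos e2] at h
            exact absurd (hwinj (J + t1.val - 1) 0 (by omega) (by omega) h) (by omega)
          · rw [if_neg e1, if_neg e2] at h
            have := hwinj (J + t1.val - 1) (J + t2.val - 1) (by omega) (by omega) h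
            exact Fin.ext (by omega)
        · intro t
          have htlt := t.isLt
          by_cases e0 : t.val = 0
          · have hne : t ≠ Fin.last M := by
              intro hcon
              rw [hcon, Fin.val_last] at e0
              omega
            have hval1 : (t + 1).val = 1 := by rw [Fin.val_add_one, if_neg hne, e0]
            have hc2t : c2 t = w 0 := by simp only [hc2def]; rw [if_pos e0]
            have hc2t1 : c2 (t + 1) = w J := by
              simp only [hc2def]
              rw [hval1, if_neg one_ne_zero]
              congr 1 <;> omega
            rw [hc2t, hc2t1, hwJ, hw0]
            exact hadj
          · by_cases eM : t.val = M
            · have hne : t = Fin.last M := Fin.ext (by rw [eM, Fin.val_last])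
              have hval : (t + 1).val = 0 := by rw [Fin.val_add_one, if_pos hne]
              have hc2t : c2 t = w q := by
                simp only [hc2def]
                rw [if_neg e0]
                congr 1
                omega
              have hc2t1 : c2 (t + 1) = w 0 := by
                simp only [hc2def]
                rw [hval, if_pos rfl]
              rw [hc2t, hc2t1, ← hwQ]
              exact hwadj q
            · have hne : t ≠ Fin.last M := fun hcon => eM (by rw [hcon, Fin.val_last])
              have hval : (t + 1).val = t.val + 1 := by rw [Fin.val_add_one, if_neg hne]
              have hc2t : c2 t = w (J + t.val - 1) := by
                simp only [hc2def]; rw [if_neg e0]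
              have hc2t1 : c2 (t + 1) = w (J + t.val) := by
                simp only [hc2def]
                rw [hval, if_neg (by omega)]
                congr 1 <;> omega
              rw [hc2t, hc2t1]
              have h := hwadj (J + t.val - 1)
              have harith : J + t.val - 1 + 1 = J + t.val := by omega
              rwa [harith] at h
      have hZc2 : Zc k G c2 = ech k G (w 0) (w J)
          + ∑ n ∈ Finset.range M, ech k G (w (J + n)) (w (J + n + 1)) := by
        rw [Zc_range, Finset.sum_range_succ', add_comm]
        congr 1
        · simp only [Nat.zero_add]
          rw [show ((0 : ℕ) : Fin (M + 1)) = 0 from Nat.cast_zero, hc2zero,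
            hc2cast 1 le_rfl (by omega)]
          congr 1 <;> omega
        · refine Finset.sum_congr rfl fun n hn => ?_
          rw [Finset.mem_range] at hn
          rw [hc2cast (n + 1) (by omega) (by omega)]
          rcases Nat.lt_or_ge (n + 1) M with h | h
          · rw [hc2cast (n + 1 + 1) (by omega) (by omega)]
            congr 1 <;> omega
          · have hnM : n + 1 = M := by omega
            have hz : ((n + 1 + 1 : ℕ) : Fin (M + 1)) = 0 := by
              rw [hnM]
              exact Fin.natCast_self (M + 1)
            rw [hz, hc2zero]
            have hq1 : J + n + 1 = q + 1 := by omega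
            rw [hq1, hwQ]
            congr 1 <;> omega
      have h0 : ech k G (w J) (w 0) + ech k G (w 0) (w J) = 0 := by
        rw [ech_swap k G (w J) (w 0)]
        abel
      have habel : ∀ A B x y : (cliqueComplex G).chain k 2, x + y = 0 →
          (A + x) + (y + B) = A + B := by
        intro A B x y h
        calc (A + x) + (y + B) = (A + B) + (x + y) := by abel
        _ = A + B := by rw [h, add_zero]
      have hqsum : ∑ n ∈ Finset.range (q + 1), ech k G (w n) (w (n + 1))
          = (∑ n ∈ Finset.range J, ech k G (w n) (w (n + 1)))
            + ∑ n ∈ Finset.range M, ech k G (w (J + n)) (w (J + n + 1)) := by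
        have h1 : ∑ n ∈ Finset.range M, ech k G (w (J + n)) (w (J + n + 1))
            = ∑ n ∈ Finset.Ico J (q + 1), ech k G (w n) (w (n + 1)) := by
          rw [Finset.sum_Ico_eq_sum_range, ← hMdef]
        rw [h1, Finset.range_eq_Ico, Finset.range_eq_Ico]
        exact (Finset.sum_Ico_consecutive (fun n => ech k G (w n) (w (n + 1))) (k := q + 1) (Nat.zero_le J) (by omega)).symm
      have hkey : Zc k G c1 + Zc k G c2 = Zc k G u := by
        rw [hZc1, hZc2, habel _ _ _ _ h0, ← hqsum, Zc_range]
      rw [← hkey]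
      exact Submodule.add_mem _ (ih J (by omega) c1 hc1) (ih M (by omega) c2 hc2)

noncomputable def zval (z : (cliqueComplex G).chain k 2) (s : Finset V) : k :=
  if h : s ∈ (cliqueComplex G).faces ∧ s.card = 2 then z ⟨s, h⟩ else 0

lemma zval_apply (z : (cliqueComplex G).chain k 2)
    (F : {F : Finset V // F ∈ (cliqueComplex G).faces ∧ F.card = 2}) :
    zval k G z F.1 = z F := by
  rw [zval, dif_pos F.2]

def suppG (z : (cliqueComplex G).chain k 2) : SimpleGraph V where
  Adj a b := a ≠ b ∧ zval k G z {a, b} ≠ 0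
  symm := by
    constructor
    intro a b h
    exact ⟨h.1.symm, by rw [Finset.pair_comm]; exact h.2⟩
  loopless := ⟨fun a h => h.1 rfl⟩

lemma suppG_to_G (z : (cliqueComplex G).chain k 2) {a b : V}
    (h : (suppG k G z).Adj a b) : G.Adj a b := by
  have h2 := h.2
  rw [zval] at h2
  by_cases hc : ({a, b} : Finset V) ∈ (cliqueComplex G).faces ∧ ({a, b} : Finset V).card = 2
  · have hclique : G.IsClique (↑({a, b} : Finset V) : Set V) := hc.1
    exact hclique (by simp) (by simp) h.1
  · rw [dif_neg hc] at h2
    exact absurd rfl h2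

lemma suppG_deg2 (z : (cliqueComplex G).chain k 2)
    (hz : (cliqueComplex G).bdry k 1 z = 0) {a b : V}
    (h : (suppG k G z).Adj a b) :
    ∃ c, c ≠ b ∧ (suppG k G z).Adj a c := by
  by_contra hcon
  push_neg at hcon
  have hGadj : G.Adj a b := suppG_to_G k G z h
  have hFa : ({a} : Finset V) ∈ (cliqueComplex G).faces := singleton_face G a
  have h0 : (cliqueComplex G).bdry k 1 z ⟨{a}, hFa, Finset.card_singleton a⟩ = 0 := by
    rw [hz]; rfl
  have hb1 : b ∉ ({a} : Finset V) := by simp [hGadj.ne']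
  have hb2 : insert b ({a} : Finset V) ∈ (cliqueComplex G).faces := pair_face G hGadj.symm
  have huniq : ∀ (c : V) (hc : c ∉ ({a} : Finset V) ∧
      insert c ({a} : Finset V) ∈ (cliqueComplex G).faces), c ≠ b →
      z ⟨insert c ({a} : Finset V), hc.2,
        by rw [Finset.card_insert_of_notMem hc.1, Finset.card_singleton]⟩ = 0 := by
    intro c hc hcb
    have hca : c ≠ a := by
      intro hh
      exact hc.1 (by rw [hh]; exact Finset.mem_singleton_self a)
    have hz0 : zval k G z {a, c} = 0 := by
      by_contra hne0
      exact hcon c hcb ⟨Ne.symm hca, hne0⟩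
    have hval : zval k G z (insert c ({a} : Finset V)) = 0 := by
      rw [show insert c ({a} : Finset V) = {a, c} from Finset.pair_comm c a]
      exact hz0
    exact (zval_apply k G z ⟨insert c ({a} : Finset V), hc.2,
      by rw [Finset.card_insert_of_notMem hc.1, Finset.card_singleton]⟩).symm.trans hval
  rw [bdry_apply_single k _ z ⟨{a}, hFa, Finset.card_singleton a⟩ b hb1 hb2 huniq] at h0
  have hzz : zval k G z {b, a} ≠ 0 := by
    rw [Finset.pair_comm]
    exact h.2
  apply hzz
  have h5 := zval_apply k G z ⟨({b, a} : Finset V), hb2,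
    by rw [Finset.card_insert_of_notMem hb1, Finset.card_singleton]⟩
  rw [h5]
  rcases mul_eq_zero.mp h0 with hc | hc
  · exact absurd hc (pow_ne_zero _ (by norm_num))
  · exact hc

noncomputable def nxt (H : SimpleGraph V) (p c : V) : V :=
  if h : ∃ u, u ≠ p ∧ H.Adj c u then h.choose else c

noncomputable def seqf (H : SimpleGraph V) (a b : V) : ℕ → V × V
  | 0 => (a, b)
  | n + 1 => ((seqf H a b n).2, nxt H (seqf H a b n).1 (seqf H a b n).2)

lemma exists_cycle (H : SimpleGraph V)
    (hdeg : ∀ a b, H.Adj a b → ∃ c, c ≠ b ∧ H.Adj a c)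
    {a b : V} (hab : H.Adj a b) :
    ∃ q : ℕ, 2 ≤ q ∧ ∃ v : Fin (q + 1) → V, IsGraphCycle H v := by
  have hstep : ∀ p c, H.Adj p c → H.Adj c (nxt H p c) ∧ nxt H p c ≠ p := by
    intro p c hpc
    have hex : ∃ u, u ≠ p ∧ H.Adj c u := by
      obtain ⟨u, hu1, hu2⟩ := hdeg c p hpc.symm
      exact ⟨u, hu1, hu2⟩
    rw [nxt, dif_pos hex]
    exact ⟨hex.choose_spec.2, hex.choose_spec.1⟩
  set f : ℕ → V := fun n => (seqf H a b n).1 with hfdef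
  have hadjseq : ∀ n, H.Adj (seqf H a b n).1 (seqf H a b n).2 := by
    intro n
    induction n with
    | zero => exact hab
    | succ n ihn =>
      show H.Adj (seqf H a b n).2 (nxt H (seqf H a b n).1 (seqf H a b n).2)
      exact (hstep _ _ ihn).1
  have hfadj : ∀ n, H.Adj (f n) (f (n + 1)) := fun n => hadjseq n
  have hf2 : ∀ n, f (n + 2) ≠ f n := by
    intro n
    show (seqf H a b (n + 2)).1 ≠ (seqf H a b n).1
    exact (hstep _ _ (hadjseq n)).2
  have hrep : ∃ n, ∃ m, m < n ∧ f m = f n := by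
    obtain ⟨x, y, hxy, hfxy⟩ := Finite.exists_ne_map_eq_of_infinite f
    rcases Nat.lt_or_ge x y with hl | hl
    · exact ⟨y, x, hl, hfxy⟩
    · have hl2 : y < x := by omega
      exact ⟨x, y, hl2, hfxy.symm⟩
  set N := Nat.find hrep with hNdef
  obtain ⟨m, hmN, hfm⟩ := Nat.find_spec hrep
  rw [← hNdef] at hmN hfm
  have hmin : ∀ n', n' < N → ¬ ∃ m', m' < n' ∧ f m' = f n' := fun n' hlt => Nat.find_min hrep hlt
  set Q := N - m with hQdef
  have hQ1 : Q ≠ 1 := by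
    intro hh
    have hN1 : N = m + 1 := by omega
    rw [hN1] at hfm
    exact (hfadj m).ne hfm
  have hQ2 : Q ≠ 2 := by
    intro hh
    have hN2 : N = m + 2 := by omega
    rw [hN2] at hfm
    exact hf2 m hfm.symm
  have hQ3 : 3 ≤ Q := by omega
  refine ⟨Q - 1, by omega, fun t => f (m + t.val), ?_, ?_⟩
  · intro t1 t2 hft
    have h' : f (m + t1.val) = f (m + t2.val) := hft
    by_contra hne
    have hv1 := t1.isLt
    have hv2 := t2.isLt
    rcases Nat.lt_or_ge t1.val t2.val with hlt | hge
    · exact hmin (m + t2.val) (by omega) ⟨m + t1.val, by omega, h'⟩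
    · have hlt : t2.val < t1.val := by
        rcases Nat.lt_or_ge t2.val t1.val with h'' | h''
        · exact h''
        · exact absurd (Fin.ext (by omega : t1.val = t2.val)) hne
      exact hmin (m + t1.val) (by omega) ⟨m + t2.val, by omega, h'.symm⟩
  · intro t
    have htl := t.isLt
    show H.Adj (f (m + t.val)) (f (m + (t + 1).val))
    rcases Nat.lt_or_ge (t.val + 1) (Q - 1 + 1) with hcase | hcase
    · have hval : (t + 1).val = t.val + 1 := by
        rw [Fin.val_add_one, if_neg]
        intro hcon
        have hcv : t.val = Q - 1 := by rw [hcon, Fin.val_last]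
        omega
      rw [hval]
      have hfa := hfadj (m + t.val)
      have harr : m + (t.val + 1) = m + t.val + 1 := by omega
      rw [harr]
      exact hfa
    · have htQ : t.val = Q - 1 := by omega
      have hval : (t + 1).val = 0 := by
        rw [Fin.val_add_one, if_pos (Fin.ext (by rw [htQ, Fin.val_last]))]
      rw [hval, htQ]
      have h1 := hfadj (m + (Q - 1))
      have h2 : m + (Q - 1) + 1 = N := by omega
      rw [h2, ← hfm] at h1
      have h3 : m + 0 = m := by omega
      rw [h3]
      exact h1

lemma ker_sub_range (hG : IsChordal G) :
    ∀ z : (cliqueComplex G).chain k 2, (cliqueComplex G).bdry k 1 z = 0 →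
      z ∈ LinearMap.range ((cliqueComplex G).bdry k 2) := by
  suffices h : ∀ n, ∀ z : (cliqueComplex G).chain k 2, (cliqueComplex G).bdry k 1 z = 0 →
      (Finset.univ.filter (fun F => z F ≠ 0)).card = n →
      z ∈ LinearMap.range ((cliqueComplex G).bdry k 2) by
    intro z hz
    exact h _ z hz rfl
  intro n
  induction n using Nat.strong_induction_on with
  | _ n ih =>
    intro z hz hcard
    by_cases hz0 : z = 0
    · rw [hz0]; exact zero_mem _
    · have hex : ∃ F, z F ≠ 0 := by
        by_contra hc
        push_neg at hc
        exact hz0 (funext fun F => hc F)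
      obtain ⟨F0, hF0⟩ := hex
      obtain ⟨a, b, hne, hab⟩ := Finset.card_eq_two.mp F0.2.2
      have hzab : zval k G z {a, b} ≠ 0 := by
        rw [show ({a, b} : Finset V) = F0.1 from hab.symm, zval_apply]
        exact hF0
      have hsupp : (suppG k G z).Adj a b := ⟨hne, hzab⟩
      obtain ⟨q, hq2, v, hvH⟩ :=
        exists_cycle (suppG k G z) (fun a b hh => suppG_deg2 k G z hz hh) hsupp
      have hvG : IsGraphCycle G v := ⟨hvH.1, fun i => suppG_to_G k G z (hvH.2 i)⟩
      have hZmem := cycle_mem k G hG q v hvG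
      have hedge : ∀ i : Fin (q + 1), zval k G z {v i, v (i + 1)} ≠ 0 := fun i => (hvH.2 i).2
      have hne01 : v 0 ≠ v (0 + 1) := (hvG.2 0).ne
      have hface01 : ({v 0, v (0 + 1)} : Finset V) ∈ (cliqueComplex G).faces :=
        pair_face G (hvG.2 0)
      set F1 : {F : Finset V // F ∈ (cliqueComplex G).faces ∧ F.card = 2} :=
        ⟨{v 0, v (0 + 1)}, hface01,
          by rw [Finset.card_insert_of_notMem (Finset.notMem_singleton.mpr hne01),
            Finset.card_singleton]⟩
        with hF1def
      have hZF1 : Zc k G v F1 = (if v 0 < v (0 + 1) then (1 : k) else -1) := by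
        rw [Zc, Finset.sum_apply, Finset.sum_eq_single 0]
        · rw [ech_apply, if_pos rfl]
          rcases lt_or_gt_of_ne hne01 with hlt | hlt
          · rw [if_pos hlt, if_pos hlt]
          · rw [if_neg (asymm hlt), if_pos hlt, if_neg (asymm hlt)]
        · intro i _ hi0
          rw [ech_apply]
          refine if_neg fun hcon => ?_
          have h' : ({v 0, v (0 + 1)} : Finset V) = {v i, v (i + 1)} := hcon
          have hmemi : v i ∈ ({v 0, v (0 + 1)} : Finset V) :=
            h' ▸ Finset.mem_insert_self (v i) _
          simp only [Finset.mem_insert, Finset.mem_singleton] at hmemi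
          rcases hmemi with hh | hh
          · exact hi0 (hvG.1 hh.symm).symm
          · have hi1 : i = 0 + 1 := hvG.1 hh
            have hmem2 : v (i + 1) ∈ ({v 0, v (0 + 1)} : Finset V) :=
              h' ▸ Finset.mem_insert_of_mem (Finset.mem_singleton_self _)
            simp only [Finset.mem_insert, Finset.mem_singleton] at hmem2
            rcases hmem2 with hh2 | hh2
            · have heq : i + 1 = 0 := hvG.1 hh2
              rw [hi1, zero_add] at heq
              have hval := congrArg Fin.val heq
              rw [Fin.val_add, Fin.val_one', Fin.val_zero] at hval
              have hq1 : 1 % (q + 1) = 1 := Nat.mod_eq_of_lt (by omega)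
              rw [hq1] at hval
              have h2q : (1 + 1) % (q + 1) = 2 := Nat.mod_eq_of_lt (by omega)
              omega
            · have heq : i + 1 = 0 + 1 := hvG.1 hh2
              exact hi0 (add_right_cancel heq)
        · intro habs
          exact absurd (Finset.mem_univ 0) habs
      set σ : k := if v 0 < v (0 + 1) then (1 : k) else -1 with hσ
      have hσσ : σ * σ = 1 := by rw [hσ]; split_ifs <;> norm_num
      set z' := z - (z F1 * σ) • Zc k G v with hz'def
      have hbz' : (cliqueComplex G).bdry k 1 z' = 0 := by
        rw [hz'def, map_sub, map_smul, hz, bdry_Zc k G v hvG.2]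
        simp
      have hz'F1 : z' F1 = 0 := by
        rw [hz'def]
        show z F1 - (z F1 * σ) • Zc k G v F1 = 0
        rw [hZF1, smul_eq_mul, mul_assoc, hσσ, mul_one, sub_self]
      have hsub : ∀ F, z' F ≠ 0 → z F ≠ 0 := by
        intro F hF
        by_contra hzF
        apply hF
        rw [hz'def]
        show z F - (z F1 * σ) • Zc k G v F = 0
        have hZcF : Zc k G v F = 0 := by
          by_contra hZc
          rw [Zc, Finset.sum_apply] at hZc
          obtain ⟨i, _, hi⟩ := Finset.exists_ne_zero_of_sum_ne_zero hZc
          rw [ech_apply] at hi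
          by_cases hcon : F.1 = {v i, v (i + 1)}
          · apply hedge i
            have h5 := zval_apply k G z F
            rw [hcon] at h5
            rw [h5, hzF]
          · rw [if_neg hcon] at hi
            exact hi rfl
        rw [hzF, hZcF, smul_zero, sub_zero]
      have hzF1 : z F1 ≠ 0 := fun hc => hedge 0 (by
        have h5 : zval k G z {v 0, v (0 + 1)} = z F1 := zval_apply k G z F1
        rw [h5, hc])
      have hcardlt : (Finset.univ.filter (fun F => z' F ≠ 0)).card < n := by
        rw [← hcard]
        refine Finset.card_lt_card ((Finset.ssubset_iff_of_subset ?_).mpr ⟨F1, ?_, ?_⟩)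
        · intro F hF
          simp only [Finset.mem_filter, Finset.mem_univ, true_and] at hF ⊢
          exact hsub F hF
        · simp only [Finset.mem_filter, Finset.mem_univ, true_and]
          exact hzF1
        · simp only [Finset.mem_filter, Finset.mem_univ, true_and, not_not]
          exact hz'F1
      have hmem' := ih _ hcardlt z' hbz' rfl
      have hzeq : z = z' + (z F1 * σ) • Zc k G v := by
        rw [hz'def]
        abel
      rw [hzeq]
      exact Submodule.add_mem _ hmem' (Submodule.smul_mem _ _ hZmem)

end ChordalAux
/-- a cycle of `G` generates a nontrivial element of the first
reduced homology of the clique complex `Δ(G)` only if `G` has a minimal cycle;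
in particular (and equivalently, since classes in `H̃₁` are generated by cycles),
if `G` is chordal then `H̃₁(Δ(G); k) = 0` for any field `k`. -/
theorem statement_1 {V : Type} [DecidableEq V] [Fintype V] [LinearOrder V]
    (k : Type) [Field k] (G : SimpleGraph V) (hG : IsChordal G) :
    Subsingleton ((cliqueComplex G).redHomology k 1) := by
  have htop : Submodule.comap (LinearMap.ker ((cliqueComplex G).bdry k 1)).subtype
      (LinearMap.range ((cliqueComplex G).bdry k 2)) = ⊤ := by
    rw [Submodule.eq_top_iff']
    intro x
    rw [Submodule.mem_comap]
    exact ker_sub_range k G hG x.1 (LinearMap.mem_ker.mp x.2)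
  exact Submodule.Quotient.subsingleton_iff.mpr htop
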